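/- Let (X,d) be a Polish space and T : Ω × X → X a sample-continuous random operator on a probability space (Ω,𝓕,P) such that P(⋃_{m≥1} ⋃_{n≥1} ⋂_{x∈X} ⋂_{y∈X} {ω : d(Tⁿ(ω,x),Tⁿ(ω,y)) ≤ (1 − 1/m)·d(x,y)}) = 1, where Tⁿ(ω,·) denotes the n-th iterate of T(ω,·). Then T has a random fixed point, unique up to a.s. equality. -/

import Mathlib

open MeasureTheory Filter Set Topology

variable {Ω : Type*} [MeasurableSpace Ω]

/-- Convergence of the iterates of a map whose `n`-th iterate is a contraction. -/
lemma tendsto_iterate_of_iterate_contr {X : Type*} [MetricSpace X]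
    [CompleteSpace X] (S : X → X) (n : ℕ) (hn : 1 ≤ n) (c : ℝ) (hc0 : 0 ≤ c) (hc1 : c < 1)
    (hco : ∀ x y : X, dist (S^[n] x) (S^[n] y) ≤ c * dist x y) (x₀ : X) :
    ∃ p : X, Tendsto (fun k => S^[k] x₀) atTop (𝓝 p) := by
  set K : NNReal := ⟨c, hc0⟩ with hK
  have hKc : (K : ℝ) = c := rfl
  have hlip : LipschitzWith K (S^[n]) :=
    LipschitzWith.of_dist_le_mul (by simpa [hKc] using hco)
  have hCW : ContractingWith K (S^[n]) := ⟨NNReal.coe_lt_coe.mp (by simpa [hKc] using hc1), hlip⟩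
  haveI : Nonempty X := ⟨x₀⟩
  set p := ContractingWith.fixedPoint (S^[n]) hCW with hp
  have hfix : S^[n] p = p := ContractingWith.fixedPoint_isFixedPt hCW
  refine ⟨p, ?_⟩
  set C : ℝ := ∑ r ∈ Finset.range n, dist (S^[r] x₀) p with hC
  have hterm : ∀ r < n, dist (S^[r] x₀) p ≤ C := by
    intro r hr
    exact Finset.single_le_sum (f := fun r => dist (S^[r] x₀) p)
      (fun i _ => dist_nonneg) (Finset.mem_range.2 hr)
  have hbound : ∀ j : ℕ, dist (S^[j] x₀) p ≤ c ^ (j / n) * C := by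
    intro j
    have hdm : n * (j / n) + j % n = j := Nat.div_add_mod j n
    have hmod : j % n < n := Nat.mod_lt _ (by omega)
    calc dist (S^[j] x₀) p
        = dist ((S^[n])^[j / n] (S^[j % n] x₀)) ((S^[n])^[j / n] p) := by
          have hpq : (S^[n])^[j / n] p = p := Function.IsFixedPt.iterate hfix (j / n)
          rw [hpq, ← Function.iterate_mul, ← Function.iterate_add_apply, hdm]
      _ ≤ (K : ℝ) ^ (j / n) * dist (S^[j % n] x₀) p := by
          simpa using (hlip.iterate (j / n)).dist_le_mul (S^[j % n] x₀) p
      _ ≤ c ^ (j / n) * C := by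
          rw [hKc]
          exact mul_le_mul_of_nonneg_left (hterm _ hmod) (by positivity)
  rw [tendsto_iff_dist_tendsto_zero]
  have hdiv : Tendsto (fun j : ℕ => j / n) atTop atTop :=
    Nat.tendsto_div_const_atTop (by omega)
  have h0 : Tendsto (fun j : ℕ => c ^ (j / n) * C) atTop (𝓝 0) := by
    have := (tendsto_pow_atTop_nhds_zero_of_lt_one hc0 hc1).comp hdiv
    simpa using this.mul_const C
  exact squeeze_zero (fun j => dist_nonneg) hbound h0

/-- Hanš's random contraction theorem: a sample-continuous random
operator on a Polish space that is a.s. an eventual probabilistic contraction has a random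
fixed point, unique up to a.s. equality. -/
theorem hans_random_fixed_point {X : Type*} [MetricSpace X] [TopologicalSpace.SeparableSpace X]
    [CompleteSpace X] [Nonempty X] [MeasurableSpace X] [BorelSpace X]
    (μ : Measure Ω) [IsProbabilityMeasure μ]
    (T : Ω → X → X)
    (hTm : ∀ x : X, Measurable (fun ω => T ω x))
    (hTc : ∀ ω : Ω, Continuous (T ω))
    (hcontr : μ {ω | ∃ m : ℕ, 1 ≤ m ∧ ∃ n : ℕ, 1 ≤ n ∧ ∀ x y : X,
        dist ((T ω)^[n] x) ((T ω)^[n] y) ≤ (1 - 1 / (m : ℝ)) * dist x y} = 1) :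
    ∃ V : Ω → X, Measurable V ∧ (∀ᵐ ω ∂μ, T ω (V ω) = V ω) ∧
      ∀ W : Ω → X, Measurable W → (∀ᵐ ω ∂μ, T ω (W ω) = W ω) → V =ᵐ[μ] W := by
  classical
  obtain ⟨x₀⟩ := ‹Nonempty X›
  -- joint measurability (Carathéodory)
  have hjoint : Measurable (Function.uncurry fun x ω => T ω x) :=
    measurable_uncurry_of_continuous_of_measurable (fun ω => hTc ω) hTm
  have hTg : ∀ {g : Ω → X}, Measurable g → Measurable (fun ω => T ω (g ω)) := by
    intro g hg
    exact hjoint.comp (hg.prodMk measurable_id)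
  have hiter : ∀ (k : ℕ) (x : X), Measurable (fun ω => (T ω)^[k] x) := by
    intro k
    induction k with
    | zero => intro x; simpa using measurable_const
    | succ k ih =>
        intro x
        simpa [Function.iterate_succ_apply'] using hTg (ih x)
  -- the good set
  set G : Set Ω := {ω | ∃ m : ℕ, 1 ≤ m ∧ ∃ n : ℕ, 1 ≤ n ∧ ∀ x y : X,
      dist ((T ω)^[n] x) ((T ω)^[n] y) ≤ (1 - 1 / (m : ℝ)) * dist x y} with hGdef
  -- measurability of G
  have hA : ∀ m n : ℕ, MeasurableSet {ω | ∀ x y : X,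
      dist ((T ω)^[n] x) ((T ω)^[n] y) ≤ (1 - 1 / (m : ℝ)) * dist x y} := by
    intro m n
    set u : ℕ → X := TopologicalSpace.denseSeq X with hu
    have hud : DenseRange u := TopologicalSpace.denseRange_denseSeq X
    have hEq : {ω | ∀ x y : X,
        dist ((T ω)^[n] x) ((T ω)^[n] y) ≤ (1 - 1 / (m : ℝ)) * dist x y} =
        ⋂ i, ⋂ j, {ω | dist ((T ω)^[n] (u i)) ((T ω)^[n] (u j)) ≤
          (1 - 1 / (m : ℝ)) * dist (u i) (u j)} := by
      ext ω
      simp only [mem_setOf_eq, mem_iInter]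
      constructor
      · intro h i j; exact h _ _
      · intro h x y
        have hF : Continuous ((T ω)^[n]) := (hTc ω).iterate n
        set s : Set (X × X) := {p : X × X |
          dist ((T ω)^[n] p.1) ((T ω)^[n] p.2) ≤ (1 - 1 / (m : ℝ)) * dist p.1 p.2} with hs
        have hsc : IsClosed s := by
          apply isClosed_le
          · exact (hF.comp continuous_fst).dist (hF.comp continuous_snd)
          · exact continuous_const.mul (continuous_fst.dist continuous_snd)
        have hdr : DenseRange (Prod.map u u) := hud.prodMap hud
        have : (univ : Set (X × X)) ⊆ s := by
          rw [← hdr.closure_eq]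
          refine closure_minimal (range_subset_iff.2 ?_) hsc
          rintro ⟨i, j⟩
          exact h i j
        exact this (mem_univ (x, y))
    rw [hEq]
    refine MeasurableSet.iInter fun i => MeasurableSet.iInter fun j => ?_
    exact measurableSet_le ((hiter n (u i)).dist (hiter n (u j))) measurable_const
  have hGmeas : MeasurableSet G := by
    have : G = ⋃ m : ℕ, ⋃ n : ℕ, ({ω | 1 ≤ m} ∩ ({ω | 1 ≤ n} ∩ {ω | ∀ x y : X,
        dist ((T ω)^[n] x) ((T ω)^[n] y) ≤ (1 - 1 / (m : ℝ)) * dist x y})) := by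
      ext ω
      simp only [hGdef, mem_setOf_eq, mem_iUnion, mem_inter_iff]
      constructor
      · rintro ⟨m, hm, n, hn, h⟩; exact ⟨m, n, hm, hn, h⟩
      · rintro ⟨m, n, hm, hn, h⟩; exact ⟨m, hm, n, hn, h⟩
    rw [this]
    exact MeasurableSet.iUnion fun m => MeasurableSet.iUnion fun n =>
      (MeasurableSet.const _).inter ((MeasurableSet.const _).inter (hA m n))
  have hGae : ∀ᵐ ω ∂μ, ω ∈ G := by
    rw [ae_iff]
    have : {ω | ¬ ω ∈ G} = Gᶜ := rfl
    rw [this, measure_compl hGmeas (measure_ne_top μ G), hcontr]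
    simp
  -- the contraction constants are in [0,1)
  have hconst : ∀ m : ℕ, 1 ≤ m → 0 ≤ 1 - 1 / (m : ℝ) ∧ 1 - 1 / (m : ℝ) < 1 := by
    intro m hm
    have hm1 : (1 : ℝ) ≤ (m : ℝ) := by exact_mod_cast hm
    have hmpos : (0 : ℝ) < (m : ℝ) := by linarith
    constructor
    · have : 1 / (m : ℝ) ≤ 1 := by
        rw [div_le_one hmpos]; exact hm1
      linarith
    · have : 0 < 1 / (m : ℝ) := by positivity
      linarith
  -- convergence of the iterates on G
  have hconv : ∀ᵐ ω ∂μ, ∃ p : X,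
      Tendsto (fun k => (T ω)^[k] x₀) atTop (𝓝 p) := by
    filter_upwards [hGae] with ω hω
    obtain ⟨m, hm, n, hn, hco⟩ := hω
    obtain ⟨hc0, hc1⟩ := hconst m hm
    exact tendsto_iterate_of_iterate_contr (T ω) n hn _ hc0 hc1 hco x₀
  obtain ⟨V, hVmeas, hVtend⟩ := measurable_limit_of_tendsto_metrizable_ae
    (f := fun k ω => (T ω)^[k] x₀) (L := atTop)
    (fun k => (hiter k x₀).aemeasurable) hconv
  refine ⟨V, hVmeas, ?_, ?_⟩
  · -- fixed point property
    filter_upwards [hVtend] with ω hω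
    have h1 : Tendsto (fun k => T ω ((T ω)^[k] x₀)) atTop (𝓝 (T ω (V ω))) :=
      ((hTc ω).tendsto (V ω)).comp hω
    have h2 : Tendsto (fun k => T ω ((T ω)^[k] x₀)) atTop (𝓝 (V ω)) := by
      have := hω.comp (tendsto_add_atTop_nat 1)
      simpa [Function.comp_def, Function.iterate_succ_apply'] using this
    exact tendsto_nhds_unique h1 h2
  · -- uniqueness
    intro W _ hWfix
    have hVfix : ∀ᵐ ω ∂μ, T ω (V ω) = V ω := by
      filter_upwards [hVtend] with ω hω
      have h1 : Tendsto (fun k => T ω ((T ω)^[k] x₀)) atTop (𝓝 (T ω (V ω))) :=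
        ((hTc ω).tendsto (V ω)).comp hω
      have h2 : Tendsto (fun k => T ω ((T ω)^[k] x₀)) atTop (𝓝 (V ω)) := by
        have := hω.comp (tendsto_add_atTop_nat 1)
        simpa [Function.comp_def, Function.iterate_succ_apply'] using this
      exact tendsto_nhds_unique h1 h2
    filter_upwards [hVfix, hWfix, hGae] with ω hV hW hω
    obtain ⟨m, hm, n, hn, hco⟩ := hω
    obtain ⟨hc0, hc1⟩ := hconst m hm
    have hVit : (T ω)^[n] (V ω) = V ω := Function.IsFixedPt.iterate hV n
    have hWit : (T ω)^[n] (W ω) = W ω := Function.IsFixedPt.iterate hW n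
    have hd : dist (V ω) (W ω) ≤ (1 - 1 / (m : ℝ)) * dist (V ω) (W ω) := by
      calc dist (V ω) (W ω) = dist ((T ω)^[n] (V ω)) ((T ω)^[n] (W ω)) := by
            rw [hVit, hWit]
        _ ≤ (1 - 1 / (m : ℝ)) * dist (V ω) (W ω) := hco _ _
    have hd0 : dist (V ω) (W ω) ≤ 0 := by nlinarith [@dist_nonneg X _ (V ω) (W ω)]
    exact dist_le_zero.mp hd0
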